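/- Let F be a field with a nontrivial nonarchimedean absolute value (e.g. ℚ_p) and let r ≤ min(n,m). The topological closure in Mat_{n×m}(F) of the set {X : rank X = r} equals {X : rank X ≤ r}. Consequently, for r ≤ p, the rank-r locus is contained in the closure of the rank-p locus, i.e. the GL_n(F)×GL_m(F)-orbits on Mat_{n×m}(F) are totally ordered by the closure order. -/

import Mathlib

open Matrix Module Submodule Set Topology Filter

section Aux
variable {F : Type*}

private lemma exists_indep_cols [Field F] {V ι : Type*} [AddCommGroup V] [Module F V]
    [FiniteDimensional F V] (c : ι → V) (d : ℕ)
    (hd : d ≤ finrank F (span F (Set.range c))) :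
    ∃ g : Fin d → ι, LinearIndependent F (c ∘ g) := by
  obtain ⟨b, hbsub, hspan, hindep⟩ := exists_linearIndependent F (Set.range c)
  have hbfin : b.Finite := hindep.setFinite
  have := hbfin.fintype
  have hcard : d ≤ Fintype.card b := by
    rw [← hspan, finrank_span_set_eq_card hindep, Set.toFinset_card] at hd
    exact hd
  obtain ⟨e⟩ : Nonempty (Fin d ↪ b) := Function.Embedding.nonempty_of_card_le (by simpa using hcard)
  choose g hg using fun (x : b) => (hbsub x.2 : (x : V) ∈ Set.range c)
  refine ⟨fun i => g (e i), ?_⟩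
  have heq : c ∘ (fun i => g (e i)) = fun i => ((e i : b) : V) := by
    funext i; simp [Function.comp, hg (e i)]
  rw [heq]
  exact hindep.comp _ e.injective

variable {n m : ℕ}

private lemma submatrix_eq_mul [Field F] {k l : ℕ} (X : Matrix (Fin n) (Fin m) F)
    (f : Fin k → Fin n) (g : Fin l → Fin m) :
    X.submatrix f g =
      ((1 : Matrix (Fin n) (Fin n) F).submatrix f id) * X *
        ((1 : Matrix (Fin m) (Fin m) F).submatrix id g) := by
  ext i j
  simp [Matrix.mul_apply, Matrix.one_apply, Finset.sum_ite_eq, Finset.sum_ite_eq']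

private lemma rank_submatrix_le' [Field F] {k l : ℕ} (X : Matrix (Fin n) (Fin m) F)
    (f : Fin k → Fin n) (g : Fin l → Fin m) : (X.submatrix f g).rank ≤ X.rank := by
  rw [submatrix_eq_mul X f g]
  exact le_trans (Matrix.rank_mul_le_left _ _) (Matrix.rank_mul_le_right _ _)

private lemma exists_isUnit_submatrix [Field F] (X : Matrix (Fin n) (Fin m) F) (d : ℕ)
    (hd : d ≤ X.rank) :
    ∃ (f : Fin d → Fin n) (g : Fin d → Fin m), IsUnit (X.submatrix f g) := by
  have h1 : d ≤ finrank F (span F (Set.range Xᵀ)) := by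
    rw [Matrix.rank_eq_finrank_span_cols] at hd; exact hd
  obtain ⟨g, hg⟩ := exists_indep_cols Xᵀ d h1
  set B : Matrix (Fin n) (Fin d) F := X.submatrix id g with hB
  have hBT : Bᵀ = Xᵀ.submatrix g id := by ext i j; simp [hB]
  have hBrank : B.rank = d := by
    rw [Matrix.rank_eq_finrank_span_cols, Matrix.col, hBT]
    have h2 : (Xᵀ.submatrix g id : Matrix (Fin d) (Fin n) F) = fun i => (Xᵀ ∘ g) i := by
      ext i j; rfl
    rw [show Set.range (Xᵀ.submatrix g id) = Set.range (Xᵀ ∘ g) by rw [h2],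
      finrank_span_eq_card hg, Fintype.card_fin]
  have h2 : d ≤ finrank F (span F (Set.range Bᵀᵀ)) := by
    have := Matrix.rank_eq_finrank_span_cols Bᵀ
    rw [Matrix.rank_transpose, hBrank] at this; exact this.le
  obtain ⟨f, hf⟩ := exists_indep_cols Bᵀᵀ d h2
  refine ⟨f, g, ?_⟩
  rw [← Matrix.linearIndependent_rows_iff_isUnit]
  have h3 : (X.submatrix f g).row = Bᵀᵀ ∘ f := by
    ext i j; rfl
  rw [h3]
  exact hf

private lemma isClosed_rank_le [NontriviallyNormedField F] (r : ℕ) :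
    IsClosed {X : Matrix (Fin n) (Fin m) F | X.rank ≤ r} := by
  rw [← isOpen_compl_iff]
  have h : {X : Matrix (Fin n) (Fin m) F | X.rank ≤ r}ᶜ =
      ⋃ (f : Fin (r+1) → Fin n) (g : Fin (r+1) → Fin m),
        {X | (X.submatrix f g).det ≠ 0} := by
    ext X
    simp only [mem_compl_iff, mem_setOf_eq, not_le, mem_iUnion]
    constructor
    · intro h
      obtain ⟨f, g, hu⟩ := exists_isUnit_submatrix X (r+1) h
      exact ⟨f, g, ((Matrix.isUnit_iff_isUnit_det _).mp hu).ne_zero⟩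
    · rintro ⟨f, g, hdet⟩
      have hu : IsUnit (X.submatrix f g) :=
        (Matrix.isUnit_iff_isUnit_det _).mpr (isUnit_iff_ne_zero.mpr hdet)
      have h1 := Matrix.rank_of_isUnit _ hu
      have h2 := rank_submatrix_le' X f g
      rw [h1, Fintype.card_fin] at h2
      omega
  rw [h]
  refine isOpen_iUnion fun f => isOpen_iUnion fun g => ?_
  exact isOpen_compl_singleton.preimage ((continuous_id.matrix_submatrix f g).matrix_det)

private lemma rank_step [NontriviallyNormedField F] (X : Matrix (Fin n) (Fin m) F)
    (hn : X.rank < n) (hm : X.rank < m) :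
    X ∈ closure {Y : Matrix (Fin n) (Fin m) F | Y.rank = X.rank + 1} := by
  classical
  set s := X.rank with hs
  set C : Submodule F (Fin n → F) := span F (Set.range Xᵀ) with hCdef
  have hC : finrank F C = s := (Matrix.rank_eq_finrank_span_cols X).symm
  have hCtop : C ≠ ⊤ := by
    intro h
    rw [h, finrank_top, finrank_fin_fun] at hC
    omega
  obtain ⟨u, hu⟩ : ∃ u, u ∉ C := by
    by_contra h
    push_neg at h
    exact hCtop (Submodule.eq_top_iff'.mpr h)
  have hu0 : u ≠ 0 := fun h => hu (h ▸ C.zero_mem)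
  obtain ⟨j, hj⟩ : ∃ j, Xᵀ j ∈ span F (Xᵀ '' (Set.univ \ {j})) := by
    by_contra h
    push_neg at h
    have hind : LinearIndependent F Xᵀ := linearIndependent_iff_notMem_span.mpr h
    have hcard := finrank_span_eq_card hind
    rw [Fintype.card_fin] at hcard
    rw [hCdef, hcard] at hC
    omega
  set E : Matrix (Fin n) (Fin m) F := Matrix.of fun i k => if k = j then u i else 0 with hE
  have key : ∀ c : F, c ≠ 0 → (X + c • E).rank = s + 1 := by
    intro c hc
    set Y := X + c • E with hY
    have hYT : ∀ k, Yᵀ k = if k = j then Xᵀ j + c • u else Xᵀ k := by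
      intro k
      funext i
      by_cases hk : k = j <;>
        simp [hY, hE, hk, Matrix.transpose_apply, Matrix.add_apply, Matrix.smul_apply]
    have hCle : C ≤ span F (Set.range Yᵀ) := by
      rw [hCdef, span_le]
      rintro _ ⟨k, rfl⟩
      by_cases hk : k = j
      · subst hk
        refine span_mono ?_ hj
        rintro _ ⟨k', ⟨-, hk'⟩, rfl⟩
        simp only [Set.mem_singleton_iff] at hk'
        exact ⟨k', by rw [hYT k', if_neg hk']⟩
      · exact subset_span ⟨k, by rw [hYT k, if_neg hk]⟩
    have hXj : Xᵀ j ∈ span F (Set.range Yᵀ) := by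
      have hXjC : Xᵀ j ∈ C := by rw [hCdef]; exact subset_span (Set.mem_range_self j)
      exact hCle hXjC
    have huY : u ∈ span F (Set.range Yᵀ) := by
      have hYj : Yᵀ j ∈ span F (Set.range Yᵀ) := subset_span ⟨j, rfl⟩
      have hueq : u = c⁻¹ • (Yᵀ j - Xᵀ j) := by
        rw [hYT j, if_pos rfl]
        simp [smul_smul, inv_mul_cancel₀ hc]
      rw [hueq]
      exact smul_mem _ _ (sub_mem hYj hXj)
    have hspan : span F (Set.range Yᵀ) = C ⊔ span F {u} := by
      apply le_antisymm
      · rw [span_le]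
        rintro _ ⟨k, rfl⟩
        rw [hYT k]
        by_cases hk : k = j
        · rw [if_pos hk]
          exact add_mem (mem_sup_left (subset_span ⟨j, rfl⟩))
            (smul_mem _ _ (mem_sup_right (subset_span rfl)))
        · rw [if_neg hk]
          exact mem_sup_left (subset_span ⟨k, rfl⟩)
      · exact sup_le hCle ((span_le).mpr (by rintro _ rfl; exact huY))
    have hrank : Y.rank = finrank F (C ⊔ span F {u} : Submodule F (Fin n → F)) := by
      rw [Matrix.rank_eq_finrank_span_cols, Matrix.col, hspan]
    have hle : finrank F (C ⊔ span F {u} : Submodule F (Fin n → F)) ≤ s + 1 := by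
      have h1 := Submodule.finrank_sup_add_finrank_inf_eq C (span F {u})
      rw [hC, finrank_span_singleton hu0] at h1
      omega
    have hlt : s < finrank F (C ⊔ span F {u} : Submodule F (Fin n → F)) := by
      rw [← hC]
      refine Submodule.finrank_lt_finrank_of_lt (lt_of_le_of_ne le_sup_left ?_)
      intro h
      exact hu (h ▸ mem_sup_right (subset_span rfl))
    omega
  have cont : Tendsto (fun c : F => X + c • E) (𝓝[≠] (0:F)) (𝓝 X) := by
    have hcont : Continuous (fun c : F => X + c • E) :=
      continuous_const.add (continuous_id.smul continuous_const)
    have h0 := (hcont.tendsto 0).mono_left (nhdsWithin_le_nhds (s := {(0:F)}ᶜ))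
    simpa using h0
  refine mem_closure_of_tendsto cont ?_
  filter_upwards [self_mem_nhdsWithin] with c hc
  exact key c hc

private lemma mem_closure_rank_eq [NontriviallyNormedField F] {p : ℕ} (hp : p ≤ min n m)
    (X : Matrix (Fin n) (Fin m) F) (hX : X.rank ≤ p) :
    X ∈ closure {Y : Matrix (Fin n) (Fin m) F | Y.rank = p} := by
  obtain ⟨k, hk⟩ : ∃ k, X.rank + k = p := ⟨p - X.rank, by omega⟩
  clear hX
  induction k generalizing X with
  | zero => exact subset_closure (by simpa using hk)
  | succ k ih =>
    have h1 : X.rank < n := by omega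
    have h2 : X.rank < m := by omega
    have hstep := rank_step X h1 h2
    have hsub : {Y : Matrix (Fin n) (Fin m) F | Y.rank = X.rank + 1} ⊆
        closure {Y : Matrix (Fin n) (Fin m) F | Y.rank = p} := by
      intro Y hY
      exact ih Y (by rw [Set.mem_setOf_eq] at hY; omega)
    have := closure_mono hsub hstep
    rwa [closure_closure] at this

end Aux

/-- Over a field with a nontrivial nonarchimedean absolute value, the closure of the set of
`n × m` matrices of rank exactly `r` (with `r ≤ min n m`) is the set of matrices of rank at
most `r`; consequently the rank strata are totally ordered by the closure order. -/
theorem closure_rank_eq {F : Type*} [NontriviallyNormedField F]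
    (hna : IsNonarchimedean (fun x : F => ‖x‖)) (n m r : ℕ) (hr : r ≤ min n m) :
    closure {X : Matrix (Fin n) (Fin m) F | X.rank = r} =
      {X : Matrix (Fin n) (Fin m) F | X.rank ≤ r} ∧
    ∀ p : ℕ, r ≤ p → p ≤ min n m →
      {X : Matrix (Fin n) (Fin m) F | X.rank = r} ⊆
        closure {X : Matrix (Fin n) (Fin m) F | X.rank = p} := by
  constructor
  · apply le_antisymm
    · exact closure_minimal (fun X hX => hX.le) (isClosed_rank_le r)
    · exact fun X hX => mem_closure_rank_eq hr X hX
  · intro p hrp hpmin X hX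
    exact mem_closure_rank_eq hpmin X (le_trans (le_of_eq hX) hrp)
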